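/- Let $c : [a,b] \to \mathbb{R}$ be continuous with $c \geq 0$, and let $\phi : [a,b] \to \mathbb{R}$ be twice continuously differentiable with $\phi'' = c\,\phi$ on $(a,b)$, $\phi(a) \geq 0$, and $\phi(b) \geq 0$. Then $\phi \geq 0$ on all of $[a,b]$. Moreover, if $\phi(b) > 0$ then $\phi > 0$ on $(a,b]$. -/

import Mathlib

open Set Filter Topology

/-- One-dimensional maximum principle: if `φ'' = c φ` with `c ≥ 0` continuous and
`φ ≥ 0` at the endpoints, then `φ ≥ 0` on `[a,b]`; if moreover `φ(b) > 0` then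
`φ > 0` on `(a,b]`. -/
theorem ode_maximum_principle (a b : ℝ) (hab : a < b) (c φ : ℝ → ℝ)
    (hc : ContinuousOn c (Set.Icc a b)) (hc0 : ∀ x ∈ Set.Icc a b, 0 ≤ c x)
    (hφ : ContDiffOn ℝ 2 φ (Set.Icc a b))
    (hode : ∀ x ∈ Set.Ioo a b, deriv (deriv φ) x = c x * φ x)
    (hφa : 0 ≤ φ a) (hφb : 0 ≤ φ b) :
    (∀ x ∈ Set.Icc a b, 0 ≤ φ x) ∧
      (0 < φ b → ∀ x ∈ Set.Ioc a b, 0 < φ x) := by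
  have hcont : ContinuousOn φ (Set.Icc a b) := hφ.continuousOn
  have hφIoo : ContDiffOn ℝ 2 φ (Set.Ioo a b) := hφ.mono Set.Ioo_subset_Icc_self
  have hd1 : ContDiffOn ℝ 1 (deriv φ) (Set.Ioo a b) :=
    hφIoo.deriv_of_isOpen isOpen_Ioo (by norm_num)
  have hφdiff : DifferentiableOn ℝ φ (Set.Ioo a b) := hφIoo.differentiableOn two_ne_zero
  have hd1diff : DifferentiableOn ℝ (deriv φ) (Set.Ioo a b) := hd1.differentiableOn one_ne_zero
  have hd1cont : ContinuousOn (deriv φ) (Set.Ioo a b) := hd1.continuousOn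
  -- Part 1: nonnegativity
  have h1 : ∀ x ∈ Set.Icc a b, 0 ≤ φ x := by
    obtain ⟨x₀, hx₀, hmin⟩ :=
      isCompact_Icc.exists_isMinOn ⟨a, Set.left_mem_Icc.2 hab.le⟩ hcont
    intro x hx
    by_contra hx'
    push_neg at hx'
    have hneg : φ x₀ < 0 := lt_of_le_of_lt (hmin hx) hx'
    have hx₀a : a < x₀ := lt_of_le_of_ne hx₀.1 (by rintro rfl; exact absurd hφa hneg.not_ge)
    have hx₀b : x₀ < b := lt_of_le_of_ne hx₀.2 (by rintro rfl; exact absurd hφb hneg.not_ge)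
    -- left zero
    set S : Set ℝ := Set.Icc a x₀ ∩ φ ⁻¹' (Set.Ici 0) with hS
    have hScl : IsClosed S :=
      (hcont.mono (Set.Icc_subset_Icc_right hx₀.2)).preimage_isClosed_of_isClosed
        isClosed_Icc isClosed_Ici
    have haS : a ∈ S := ⟨⟨le_refl a, hx₀a.le⟩, hφa⟩
    have hSbdd : BddAbove S := ⟨x₀, fun y hy => hy.1.2⟩
    set u : ℝ := sSup S with hu
    have huS : u ∈ S := hScl.csSup_mem ⟨a, haS⟩ hSbdd
    have hux₀ : u < x₀ := lt_of_le_of_ne huS.1.2 (by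
      intro h; rw [h] at huS; exact absurd huS.2 hneg.not_ge)
    -- right zero
    set T : Set ℝ := Set.Icc x₀ b ∩ φ ⁻¹' (Set.Ici 0) with hT
    have hTcl : IsClosed T :=
      (hcont.mono (Set.Icc_subset_Icc_left hx₀.1)).preimage_isClosed_of_isClosed
        isClosed_Icc isClosed_Ici
    have hbT : b ∈ T := ⟨⟨hx₀b.le, le_refl b⟩, hφb⟩
    have hTbdd : BddBelow T := ⟨x₀, fun y hy => hy.1.1⟩
    set v : ℝ := sInf T with hv
    have hvT : v ∈ T := hTcl.csInf_mem ⟨b, hbT⟩ hTbdd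
    have hx₀v : x₀ < v := lt_of_le_of_ne hvT.1.1 (by
      intro h; rw [← h] at hvT; exact absurd hvT.2 hneg.not_ge)
    -- φ < 0 on (u, v)
    have hnegIoo : ∀ y ∈ Set.Ioo u v, φ y < 0 := by
      intro y hy
      by_contra hcon
      push_neg at hcon
      rcases le_total y x₀ with hyx | hyx
      · have hyS : y ∈ S := ⟨⟨le_trans huS.1.1 hy.1.le, hyx⟩, hcon⟩
        exact absurd (le_csSup hSbdd hyS) hy.1.not_ge
      · have hyT : y ∈ T := ⟨⟨hyx, le_trans hy.2.le hvT.1.2⟩, hcon⟩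
        exact absurd (csInf_le hTbdd hyT) hy.2.not_ge
    have hIoosub : Set.Ioo u v ⊆ Set.Ioo a b := fun y hy =>
      ⟨lt_of_le_of_lt huS.1.1 hy.1, lt_of_lt_of_le hy.2 hvT.1.2⟩
    -- concavity on [u, v]
    have hconc : ConcaveOn ℝ (Set.Icc u v) φ := by
      apply concaveOn_of_deriv2_nonpos (convex_Icc u v)
      · exact hcont.mono (Set.Icc_subset_Icc huS.1.1 hvT.1.2)
      · rw [interior_Icc]; exact hφdiff.mono hIoosub
      · rw [interior_Icc]; exact hd1diff.mono hIoosub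
      · rw [interior_Icc]
        intro y hy
        show deriv (deriv φ) y ≤ 0
        rw [hode y (hIoosub hy)]
        exact mul_nonpos_of_nonneg_of_nonpos
          (hc0 y (Set.Ioo_subset_Icc_self (hIoosub hy))) (hnegIoo y hy).le
    -- contradiction at x₀
    have huv : u < v := hux₀.trans hx₀v
    have hvu : (0:ℝ) < v - u := by linarith
    set t : ℝ := (v - x₀) / (v - u) with ht
    set s : ℝ := (x₀ - u) / (v - u) with hs
    have ht0 : 0 ≤ t := div_nonneg (by linarith) hvu.le
    have hs0 : 0 ≤ s := div_nonneg (by linarith) hvu.le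
    have hts : t + s = 1 := by
      rw [ht, hs, ← add_div, div_eq_one_iff_eq hvu.ne']
      ring
    have hpt : t • u + s • v = x₀ := by
      simp only [smul_eq_mul]
      rw [ht, hs]
      field_simp
      ring
    have := hconc.2 (Set.left_mem_Icc.2 huv.le) (Set.right_mem_Icc.2 huv.le) ht0 hs0 hts
    rw [hpt] at this
    have h0 : 0 ≤ t • φ u + s • φ v := by
      simp only [smul_eq_mul]
      exact add_nonneg (mul_nonneg ht0 huS.2) (mul_nonneg hs0 hvT.2)
    linarith
  refine ⟨h1, fun hb x hx => ?_⟩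
  rcases (h1 x ⟨hx.1.le, hx.2⟩).lt_or_eq with hpos | hzero
  · exact hpos
  · exfalso
    have hxb : x < b := lt_of_le_of_ne hx.2 (by rintro rfl; exact absurd hzero.symm hb.ne')
    have hxI : x ∈ Set.Ioo a b := ⟨hx.1, hxb⟩
    -- x is a local minimum, so deriv φ x = 0
    have hlocmin : IsLocalMin φ x := by
      filter_upwards [isOpen_Ioo.mem_nhds hxI] with y hy
      rw [← hzero]
      exact h1 y (Set.Ioo_subset_Icc_self hy)
    have hderiv0 : deriv φ x = 0 := hlocmin.deriv_eq_zero
    -- bound for c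
    obtain ⟨z, hz, hzmax⟩ :=
      isCompact_Icc.exists_isMaxOn ⟨a, Set.left_mem_Icc.2 hab.le⟩ hc
    set M : ℝ := c z with hMdef
    have hM0 : 0 ≤ M := hc0 z hz
    have hM : ∀ y ∈ Set.Icc a b, c y ≤ M := fun y hy => hzmax hy
    -- Gronwall on [x, b'] for b' < b
    set f : ℝ → ℝ × ℝ := fun t => (φ t, deriv φ t) with hf
    have key : ∀ b' ∈ Set.Ioo x b, φ b' = 0 := by
      intro b' hb'
      have hsub : Set.Icc x b' ⊆ Set.Ioo a b := fun y hy =>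
        ⟨lt_of_lt_of_le hxI.1 hy.1, lt_of_le_of_lt hy.2 hb'.2⟩
      have hfc : ContinuousOn f (Set.Icc x b') :=
        ((hφIoo.continuousOn).mono hsub).prodMk (hd1cont.mono hsub)
      have hf' : ∀ t ∈ Set.Ico x b',
          HasDerivWithinAt f (deriv φ t, c t * φ t) (Set.Ici t) t := by
        intro t ht
        have htm : t ∈ Set.Ioo a b := hsub ⟨ht.1, ht.2.le⟩
        have h1d : HasDerivAt φ (deriv φ t) t :=
          ((hφdiff t htm).differentiableAt (isOpen_Ioo.mem_nhds htm)).hasDerivAt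
        have h2d : HasDerivAt (deriv φ) (c t * φ t) t := by
          have := ((hd1diff t htm).differentiableAt (isOpen_Ioo.mem_nhds htm)).hasDerivAt
          rwa [hode t htm] at this
        exact (h1d.prodMk h2d).hasDerivWithinAt
      have ha0 : ‖f x‖ ≤ 0 := by
        simp only [hf, ← hzero, hderiv0]
        simp [Prod.norm_def]
      have hnorm : ∀ t ∈ Set.Ico x b',
          ‖(deriv φ t, c t * φ t)‖ ≤ (M + 1) * ‖f t‖ + 0 := by
        intro t ht
        have htm : t ∈ Set.Icc a b :=
          Set.Ioo_subset_Icc_self (hsub ⟨ht.1, ht.2.le⟩)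
        have hct : c t ≤ M := hM t htm
        have hct0 : 0 ≤ c t := hc0 t htm
        rw [add_zero, Prod.norm_def, Prod.norm_def]
        simp only [hf, Real.norm_eq_abs]
        have hA : (0:ℝ) ≤ max |φ t| |deriv φ t| := le_max_of_le_left (abs_nonneg _)
        apply max_le
        · calc |deriv φ t| ≤ max |φ t| |deriv φ t| := le_max_right _ _
            _ ≤ (M + 1) * max |φ t| |deriv φ t| := le_mul_of_one_le_left hA (by linarith)
        · calc |c t * φ t| = |c t| * |φ t| := abs_mul _ _
            _ ≤ M * |φ t| := by
                rw [abs_of_nonneg hct0]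
                exact mul_le_mul_of_nonneg_right hct (abs_nonneg _)
            _ ≤ (M + 1) * max |φ t| |deriv φ t| := by
                apply mul_le_mul (by linarith) (le_max_left _ _) (abs_nonneg _) (by linarith)
      have := norm_le_gronwallBound_of_norm_deriv_right_le hfc hf' ha0 hnorm b'
        (Set.right_mem_Icc.2 hb'.1.le)
      rw [gronwallBound_ε0_δ0] at this
      have hfb : f b' = 0 := by
        rwa [norm_le_zero_iff] at this
      have := congrArg Prod.fst hfb
      simpa [hf] using this
    -- limit gives φ b = 0, contradiction
    haveI := right_nhdsWithin_Ioo_neBot hxb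
    have htend : Tendsto φ (𝓝[Set.Ioo x b] b) (𝓝 (φ b)) :=
      (hcont.continuousWithinAt (Set.right_mem_Icc.2 hab.le)).mono
        (fun y hy => ⟨(hxI.1.trans hy.1).le, hy.2.le⟩)
    have hle : φ b ≤ 0 :=
      le_of_tendsto htend (Filter.eventually_of_mem self_mem_nhdsWithin
        (fun y hy => (key y hy).le))
    linarith
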